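/- Let H₁,…,Hₘ be finite-dimensional real inner product spaces, H a subspace of H₁ × ⋯ × Hₘ, and W a subspace of H^⊥. Define V = ((π₁W)^⊥ × ⋯ × (πₘW)^⊥) ∩ H, where πⱼ is the j-th coordinate projection and (πⱼW)^⊥ is the orthogonal complement of πⱼW in Hⱼ. Then dim V ≥ Σⱼ dim (πⱼW)^⊥ − dim W^⊥, where W^⊥ is the orthogonal complement of W in H^⊥ (so that W ⊕ W^⊥ = H^⊥). -/

import Mathlib

open Module

lemma finrank_iInf_comap_projL {m : ℕ} {E : Fin m → Type*}
    [∀ j, NormedAddCommGroup (E j)] [∀ j, InnerProductSpace ℝ (E j)]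
    [∀ j, FiniteDimensional ℝ (E j)] (p : ∀ j, Submodule ℝ (E j)) :
    finrank ℝ (⨅ j, Submodule.comap (PiLp.projₗ 2 E j) (p j) : Submodule ℝ (PiLp 2 E))
      = ∑ j, finrank ℝ (p j) := by
  have e : (⨅ j, Submodule.comap (PiLp.projₗ 2 E j) (p j) : Submodule ℝ (PiLp 2 E))
      ≃ₗ[ℝ] (∀ j, p j) :=
    { toFun := fun x j => ⟨x.1 j, by
        have := x.2
        simp only [Submodule.mem_iInf, Submodule.mem_comap] at this
        exact this j⟩
      map_add' := fun x y => rfl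
      map_smul' := fun c x => rfl
      invFun := fun v => ⟨WithLp.toLp 2 (fun j => (v j).1), by
        simp only [Submodule.mem_iInf, Submodule.mem_comap]
        exact fun j => (v j).2⟩
      left_inv := fun x => rfl
      right_inv := fun v => rfl }
  rw [e.finrank_eq, Module.finrank_pi_fintype]

/-- With `V = ((π₁W)ᗮ × ⋯ × (πₘW)ᗮ) ∩ H` one has
`dim V ≥ Σⱼ dim (πⱼW)ᗮ − dim Wᗮ`, where `Wᗮ` is the orthogonal complement of `W`
inside `Hᗮ` (realised as `Wᗮ ⊓ Hᗮ` in the ambient product space). -/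
theorem dim_lower_bound_for_dual_subspace {m : ℕ} {E : Fin m → Type*}
    [∀ j, NormedAddCommGroup (E j)] [∀ j, InnerProductSpace ℝ (E j)]
    [∀ j, FiniteDimensional ℝ (E j)]
    (H W : Submodule ℝ (PiLp 2 E)) (hW : W ≤ Hᗮ) :
    ((∑ j, (finrank ℝ ((W.map (PiLp.projₗ 2 E j))ᗮ) : ℤ))
        - (finrank ℝ ((Wᗮ ⊓ Hᗮ : Submodule ℝ (PiLp 2 E))) : ℤ))
      ≤ (finrank ℝ
          (((⨅ j, Submodule.comap (PiLp.projₗ 2 E j) ((W.map (PiLp.projₗ 2 E j))ᗮ)) ⊓ H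
            : Submodule ℝ (PiLp 2 E))) : ℤ) := by
  set K : Submodule ℝ (PiLp 2 E) :=
    ⨅ j, Submodule.comap (PiLp.projₗ 2 E j) ((W.map (PiLp.projₗ 2 E j))ᗮ) with hK
  set n := finrank ℝ (PiLp 2 E) with hn
  -- dim K = Σ dim Vⱼ
  have hKdim : finrank ℝ K = ∑ j, finrank ℝ ((W.map (PiLp.projₗ 2 E j))ᗮ) :=
    finrank_iInf_comap_projL _
  -- H ≤ Wᗮ
  have hHW : H ≤ Wᗮ := by
    intro x hx
    rw [Submodule.mem_orthogonal]
    intro w hw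
    rw [real_inner_comm]
    exact (Submodule.mem_orthogonal H w).mp (hW hw) x hx
  -- K ≤ Wᗮ
  have hKW : K ≤ Wᗮ := by
    intro x hx
    rw [Submodule.mem_orthogonal]
    intro w hw
    rw [hK] at hx
    simp only [Submodule.mem_iInf, Submodule.mem_comap] at hx
    rw [PiLp.inner_apply]
    refine Finset.sum_eq_zero fun j _ => ?_
    exact (hx j) (w j) (Submodule.mem_map_of_mem hw)
  -- dimension formula for K and H
  have h1 : finrank ℝ (K ⊔ H : Submodule ℝ (PiLp 2 E))
      + finrank ℝ (K ⊓ H : Submodule ℝ (PiLp 2 E))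
      = finrank ℝ K + finrank ℝ H := Submodule.finrank_sup_add_finrank_inf_eq K H
  have h2 : finrank ℝ (K ⊔ H : Submodule ℝ (PiLp 2 E)) ≤ finrank ℝ Wᗮ :=
    Submodule.finrank_mono (sup_le hKW hHW)
  -- dim Wᗮ + dim W = n etc.
  have h3 : finrank ℝ W + finrank ℝ Wᗮ = n := Submodule.finrank_add_finrank_orthogonal W
  have h4 : finrank ℝ H + finrank ℝ Hᗮ = n := Submodule.finrank_add_finrank_orthogonal H
  -- Wᗮ ⊔ Hᗮ = ⊤
  have h5 : (Wᗮ ⊔ Hᗮ : Submodule ℝ (PiLp 2 E)) = ⊤ := by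
    rw [eq_top_iff, ← Submodule.sup_orthogonal_of_hasOrthogonalProjection (K := H)]
    exact sup_le (le_sup_of_le_left hHW) le_sup_right
  have h6 : finrank ℝ (Wᗮ ⊔ Hᗮ : Submodule ℝ (PiLp 2 E))
      + finrank ℝ (Wᗮ ⊓ Hᗮ : Submodule ℝ (PiLp 2 E))
      = finrank ℝ Wᗮ + finrank ℝ Hᗮ := Submodule.finrank_sup_add_finrank_inf_eq Wᗮ Hᗮ
  have h7 : finrank ℝ (Wᗮ ⊔ Hᗮ : Submodule ℝ (PiLp 2 E)) = n := by
    rw [h5]; exact finrank_top ℝ _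
  have hsum : (∑ j, (finrank ℝ ((W.map (PiLp.projₗ 2 E j))ᗮ) : ℤ))
      = (finrank ℝ K : ℤ) := by
    rw [hKdim]; push_cast; ring
  rw [hsum]
  omega
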